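/- With the aggregated K-power system matrices A, N, B, C as in the context, for every integer i ≥ 1 with i ≠ k and all s₁, …, s_i ∈ ℂ such that each s_l I − A is invertible (equivalently, each s_l I − A_j is invertible for all j), the i-th multivariable transfer function vanishes: H_i(s₁, …, s_i) := C (s_i I − A)⁻¹ N (s_{i−1} I − A)⁻¹ N ⋯ N (s₁ I − A)⁻¹ B = 0 (a product containing i resolvents of A interlaced with i − 1 copies of N). -/
import Mathlib


open Matrix

/-- The aggregated block-diagonal matrix `A = blockdiag(A₀, …, A_{k-1})` of a K-power
bilinear system (indices are 0-based: subsystem `j` has dimension `n j`). -/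
def aggBlockDiag {α : Type*} [Zero α] (k : ℕ) (n : ℕ → ℕ)
    (A : (j : ℕ) → Matrix (Fin (n j)) (Fin (n j)) α) :
    Matrix ((j : Fin k) × Fin (n j)) ((j : Fin k) × Fin (n j)) α :=
  fun p q =>
    if h : (p.1 : ℕ) = (q.1 : ℕ) then A (p.1 : ℕ) p.2 (Fin.cast (congrArg n h.symm) q.2) else 0

/-- The aggregated block-subdiagonal matrix `N` whose only nonzero blocks are
`N j` placed in block position `(j+1, j)`. -/
def aggSubDiag {α : Type*} [Zero α] (k : ℕ) (n : ℕ → ℕ)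
    (N : (j : ℕ) → Matrix (Fin (n (j + 1))) (Fin (n j)) α) :
    Matrix ((j : Fin k) × Fin (n j)) ((j : Fin k) × Fin (n j)) α :=
  fun p q =>
    if h : (p.1 : ℕ) = (q.1 : ℕ) + 1 then N (q.1 : ℕ) (Fin.cast (congrArg n h) p.2) q.2 else 0

/-- The aggregated input vector `B` whose first block is `B₁` and all other blocks are zero. -/
def aggB {α : Type*} [Zero α] (k : ℕ) (n : ℕ → ℕ) (B1 : Fin (n 0) → α) :
    ((j : Fin k) × Fin (n j)) → α :=
  fun p => if h : (p.1 : ℕ) = 0 then B1 (Fin.cast (congrArg n h) p.2) else 0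

/-- The aggregated output vector `C` whose last block is `C_k` and all other blocks are zero. -/
def aggC {α : Type*} [Zero α] (k : ℕ) (n : ℕ → ℕ) (Ck : Fin (n (k - 1)) → α) :
    ((j : Fin k) × Fin (n j)) → α :=
  fun p => if h : (p.1 : ℕ) = k - 1 then Ck (Fin.cast (congrArg n h) p.2) else 0

/-- `resolventChain A N m s = (s_m I − A)⁻¹ N (s_{m-1} I − A)⁻¹ N ⋯ N (s₀ I − A)⁻¹`, a product
of `m + 1` resolvents of `A` interlaced with `m` copies of `N`. -/
noncomputable def resolventChain {ι : Type*} [Fintype ι] [DecidableEq ι]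
    (A N : Matrix ι ι ℂ) : (m : ℕ) → (Fin (m + 1) → ℂ) → Matrix ι ι ℂ
  | 0, s => (s 0 • (1 : Matrix ι ι ℂ) - A)⁻¹
  | m + 1, s =>
      (s (Fin.last (m + 1)) • (1 : Matrix ι ι ℂ) - A)⁻¹ * N *
        resolventChain A N m (fun l => s l.castSucc)

section Aux

variable {ι : Type*} [Fintype ι] [DecidableEq ι]

lemma comm_inv_of_comm (M T : Matrix ι ι ℂ) (hM : IsUnit M) (h : T * M = M * T) :
    T * M⁻¹ = M⁻¹ * T := by
  have hd := (Matrix.isUnit_iff_isUnit_det M).mp hM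
  have h1 : M * M⁻¹ = 1 := Matrix.mul_nonsing_inv M hd
  have h2 : M⁻¹ * M = 1 := Matrix.nonsing_inv_mul M hd
  calc T * M⁻¹ = M⁻¹ * M * T * M⁻¹ := by rw [h2, Matrix.one_mul]
    _ = M⁻¹ * (T * M) * M⁻¹ := by rw [h]; simp only [Matrix.mul_assoc]
    _ = M⁻¹ * T * (M * M⁻¹) := by simp only [Matrix.mul_assoc]
    _ = M⁻¹ * T := by rw [h1, Matrix.mul_one]

lemma chain_comm (A N T : Matrix ι ι ℂ) (hA : T * A = A * T) (hN : T * N = (2 : ℂ) • (N * T))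
    (m : ℕ) (s : Fin (m + 1) → ℂ)
    (hs : ∀ l, IsUnit (s l • (1 : Matrix ι ι ℂ) - A)) :
    T * resolventChain A N m s = (2 : ℂ) ^ m • (resolventChain A N m s * T) := by
  induction m with
  | zero =>
      simp only [resolventChain, pow_zero, one_smul]
      refine comm_inv_of_comm _ _ (hs 0) ?_
      rw [Matrix.mul_sub, Matrix.sub_mul, hA, Matrix.mul_smul, Matrix.smul_mul,
        Matrix.mul_one, Matrix.one_mul]
  | succ m ih =>
      have hres : T * (s (Fin.last (m + 1)) • (1 : Matrix ι ι ℂ) - A)⁻¹ =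
          (s (Fin.last (m + 1)) • (1 : Matrix ι ι ℂ) - A)⁻¹ * T := by
        refine comm_inv_of_comm _ _ (hs (Fin.last (m + 1))) ?_
        rw [Matrix.mul_sub, Matrix.sub_mul, hA, Matrix.mul_smul, Matrix.smul_mul,
          Matrix.mul_one, Matrix.one_mul]
      have ih' := ih (fun l => s l.castSucc) (fun l => hs l.castSucc)
      show T * ((s (Fin.last (m + 1)) • (1 : Matrix ι ι ℂ) - A)⁻¹ * N *
          resolventChain A N m (fun l => s l.castSucc)) = _
      calc T * ((s (Fin.last (m + 1)) • (1 : Matrix ι ι ℂ) - A)⁻¹ * N *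
            resolventChain A N m (fun l => s l.castSucc))
          = (s (Fin.last (m + 1)) • (1 : Matrix ι ι ℂ) - A)⁻¹ * (T * N) *
            resolventChain A N m (fun l => s l.castSucc) := by
            rw [← Matrix.mul_assoc, ← Matrix.mul_assoc, hres]; simp only [Matrix.mul_assoc]
        _ = (2 : ℂ) • ((s (Fin.last (m + 1)) • (1 : Matrix ι ι ℂ) - A)⁻¹ * N *
            (T * resolventChain A N m (fun l => s l.castSucc))) := by
            rw [hN, Matrix.mul_smul, Matrix.smul_mul]; simp only [Matrix.mul_assoc]
        _ = (2 : ℂ) ^ (m + 1) • ((s (Fin.last (m + 1)) • (1 : Matrix ι ι ℂ) - A)⁻¹ * N *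
            resolventChain A N m (fun l => s l.castSucc) * T) := by
            rw [ih', Matrix.mul_smul, smul_smul, pow_succ, mul_comm]
            simp only [Matrix.mul_assoc]
  
end Aux

/-- For the aggregated K-power system matrices, every multivariable transfer function
`H_i(s₁, …, s_i) = C (s_i I − A)⁻¹ N ⋯ N (s₁ I − A)⁻¹ B` with `i ≥ 1`, `i ≠ k`, vanishes,
provided each `s_l I − A` is invertible.  (Here `i = m + 1`.) -/
theorem kpower_transfer_function_vanishes (k : ℕ) (hk : 1 ≤ k) (n : ℕ → ℕ)
    (A : (j : ℕ) → Matrix (Fin (n j)) (Fin (n j)) ℝ)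
    (N : (j : ℕ) → Matrix (Fin (n (j + 1))) (Fin (n j)) ℝ)
    (B1 : Fin (n 0) → ℝ) (Ck : Fin (n (k - 1)) → ℝ)
    (m : ℕ) (him : m + 1 ≠ k) (s : Fin (m + 1) → ℂ)
    (hs : ∀ l : Fin (m + 1),
      IsUnit (s l • (1 : Matrix ((j : Fin k) × Fin (n j)) ((j : Fin k) × Fin (n j)) ℂ) -
        (aggBlockDiag k n A).map (Complex.ofReal))) :
    (fun p => ((aggC k n Ck p : ℝ) : ℂ)) ⬝ᵥ
      (resolventChain ((aggBlockDiag k n A).map (Complex.ofReal))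
          ((aggSubDiag k n N).map (Complex.ofReal)) m s).mulVec
        (fun p => ((aggB k n B1 p : ℝ) : ℂ)) = 0 := by
  set ι := (j : Fin k) × Fin (n j)
  set A' : Matrix ι ι ℂ := (aggBlockDiag k n A).map (Complex.ofReal) with hA'def
  set N' : Matrix ι ι ℂ := (aggSubDiag k n N).map (Complex.ofReal) with hN'def
  set B' : ι → ℂ := fun p => ((aggB k n B1 p : ℝ) : ℂ) with hB'def
  set C' : ι → ℂ := fun p => ((aggC k n Ck p : ℝ) : ℂ) with hC'def
  set T : Matrix ι ι ℂ := Matrix.diagonal (fun p : ι => (2 : ℂ) ^ (p.1 : ℕ)) with hTdef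
  have hA : T * A' = A' * T := by
    ext p q
    rw [hTdef, Matrix.diagonal_mul, Matrix.mul_diagonal, hA'def, Matrix.map_apply,
      aggBlockDiag]
    by_cases h : (p.1 : ℕ) = (q.1 : ℕ)
    · have h2 : (2 : ℂ) ^ (p.1 : ℕ) = 2 ^ (q.1 : ℕ) := by rw [h]
      rw [dif_pos h, h2]; ring
    · rw [dif_neg h]; simp
  have hN : T * N' = (2 : ℂ) • (N' * T) := by
    ext p q
    rw [Matrix.smul_apply, hTdef, Matrix.diagonal_mul, Matrix.mul_diagonal, hN'def,
      Matrix.map_apply, aggSubDiag]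
    by_cases h : (p.1 : ℕ) = (q.1 : ℕ) + 1
    · have h2 : (2 : ℂ) ^ (p.1 : ℕ) = 2 ^ ((q.1 : ℕ) + 1) := by rw [h]
      rw [dif_pos h, h2, pow_succ, smul_eq_mul]; ring
    · rw [dif_neg h]; simp
  have hB : T.mulVec B' = B' := by
    funext p
    rw [hTdef, Matrix.mulVec_diagonal, hB'def]
    by_cases h : (p.1 : ℕ) = 0
    · simp [h]
    · simp [aggB, h]
  have hC : Matrix.vecMul C' T = (2 : ℂ) ^ (k - 1) • C' := by
    funext q
    rw [hTdef, Matrix.vecMul_diagonal, Pi.smul_apply, smul_eq_mul, hC'def]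
    by_cases h : (q.1 : ℕ) = k - 1
    · have h2 : (2 : ℂ) ^ (q.1 : ℕ) = 2 ^ (k - 1) := by rw [h]
      rw [h2]; ring
    · simp [aggC, h]
  have key := chain_comm A' N' T hA hN m s hs
  set R : Matrix ι ι ℂ := resolventChain A' N' m s with hRdef
  have e1 : C' ⬝ᵥ (T * R).mulVec B' = (2 : ℂ) ^ (k - 1) * (C' ⬝ᵥ R.mulVec B') := by
    rw [← Matrix.mulVec_mulVec, Matrix.dotProduct_mulVec (v := C'), hC,
      smul_dotProduct, smul_eq_mul]
  have e2 : C' ⬝ᵥ (T * R).mulVec B' = (2 : ℂ) ^ m * (C' ⬝ᵥ R.mulVec B') := by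
    rw [key, Matrix.smul_mulVec, dotProduct_smul, smul_eq_mul,
      ← Matrix.mulVec_mulVec, hB]
  have hne : (2 : ℂ) ^ (k - 1) ≠ (2 : ℂ) ^ m := by
    intro h
    have h2 : ((2 ^ (k - 1) : ℕ) : ℂ) = ((2 ^ m : ℕ) : ℂ) := by push_cast; exact h
    have h3 : (2 : ℕ) ^ (k - 1) = 2 ^ m := Nat.cast_injective h2
    have h4 : k - 1 = m := Nat.pow_right_injective (le_refl 2) h3
    omega
  have hfin : ((2 : ℂ) ^ (k - 1) - (2 : ℂ) ^ m) * (C' ⬝ᵥ R.mulVec B') = 0 := by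
    rw [sub_mul, ← e1, ← e2, sub_self]
  rcases mul_eq_zero.mp hfin with h | h
  · exact absurd (sub_eq_zero.mp h) hne
  · exact h
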